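/- In a right-angled Coxeter group (W,S), two reduced words in the generators S represent the same element of W if and only if one can be transformed into the other by a finite sequence of swaps of adjacent commuting letters; moreover, any word representing the identity can be reduced to the empty word by a sequence of operations each of which either deletes two equal adjacent letters or swaps two adjacent commuting letters. -/

import Mathlib

open CoxeterSystem

variable {B W : Type*} [Group W] {M : CoxeterMatrix B}

/-- One swap of two adjacent commuting letters in a word. -/
def SwapStep (cs : CoxeterSystem M W) (l l' : List B) : Prop :=
  ∃ (l₁ l₂ : List B) (a b : B),
    cs.simple a * cs.simple b = cs.simple b * cs.simple a ∧
    l = l₁ ++ a :: b :: l₂ ∧ l' = l₁ ++ b :: a :: l₂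

/-- One deletion of two equal adjacent letters in a word. -/
def DelStep (l l' : List B) : Prop :=
  ∃ (l₁ l₂ : List B) (a : B), l = l₁ ++ a :: a :: l₂ ∧ l' = l₁ ++ l₂


namespace RAux

/-- distinct commuting generators -/
def Ecm (cs : CoxeterSystem M W) (a b : B) : Prop :=
  a ≠ b ∧ cs.simple a * cs.simple b = cs.simple b * cs.simple a

theorem Ecm.symm {cs : CoxeterSystem M W} {a b : B} (h : Ecm cs a b) : Ecm cs b a :=
  ⟨h.1.symm, h.2.symm⟩

/-- swap of adjacent `Ecm`-commuting letters -/
def CSwap (cs : CoxeterSystem M W) (l l' : List B) : Prop :=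
  ∃ l₁ l₂ a b, Ecm cs a b ∧ l = l₁ ++ a :: b :: l₂ ∧ l' = l₁ ++ b :: a :: l₂

/-- swap-equivalence -/
def Csim (cs : CoxeterSystem M W) (l l' : List B) : Prop :=
  Relation.ReflTransGen (CSwap cs) l l'

variable (cs : CoxeterSystem M W)

theorem CSwap.symm {cs : CoxeterSystem M W} {l l' : List B} (h : CSwap cs l l') :
    CSwap cs l' l := by
  obtain ⟨l₁, l₂, a, b, hE, rfl, rfl⟩ := h
  exact ⟨l₁, l₂, b, a, hE.symm, rfl, rfl⟩

theorem Csim.refl (l : List B) : Csim cs l l := Relation.ReflTransGen.refl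

theorem Csim.symm {cs : CoxeterSystem M W} {l l' : List B} (h : Csim cs l l') : Csim cs l' l :=
  by
  induction h with
  | refl => exact Relation.ReflTransGen.refl
  | tail _ hs ih => exact Relation.ReflTransGen.head hs.symm ih

theorem Csim.trans {cs : CoxeterSystem M W} {l l' l'' : List B} (h : Csim cs l l')
    (h' : Csim cs l' l'') : Csim cs l l'' := Relation.ReflTransGen.trans h h'

theorem CSwap.cons {cs : CoxeterSystem M W} {l l' : List B} (c : B) (h : CSwap cs l l') :
    CSwap cs (c :: l) (c :: l') := by
  obtain ⟨l₁, l₂, a, b, hE, rfl, rfl⟩ := h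
  exact ⟨c :: l₁, l₂, a, b, hE, rfl, rfl⟩

theorem Csim.cons {cs : CoxeterSystem M W} {l l' : List B} (c : B) (h : Csim cs l l') :
    Csim cs (c :: l) (c :: l') :=
  Relation.ReflTransGen.lift (List.cons c) (fun _ _ (h : CSwap cs _ _) => h.cons c) _ _ h

theorem CSwap.length {cs : CoxeterSystem M W} {l l' : List B} (h : CSwap cs l l') :
    l.length = l'.length := by
  obtain ⟨l₁, l₂, a, b, _, rfl, rfl⟩ := h
  simp

theorem Csim.length {cs : CoxeterSystem M W} {l l' : List B} (h : Csim cs l l') :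
    l.length = l'.length := by
  induction h with
  | refl => rfl
  | tail _ h ih => exact ih.trans h.length

open Classical in
/-- delete the first copy of `a` that can be moved to the front by swaps -/
noncomputable def del (a : B) : List B → Option (List B)
  | [] => none
  | b :: u => if b = a then some u else
      if Ecm cs a b then (del a u).map (b :: ·) else none

@[simp] theorem del_nil (a : B) : del cs a [] = none := by simp [del]

theorem del_cons_self (a : B) (u : List B) : del cs a (a :: u) = some u := by
  simp [del]

theorem del_cons_of_ecm {a b : B} (hne : b ≠ a) (hE : Ecm cs a b) (u : List B) :
    del cs a (b :: u) = (del cs a u).map (b :: ·) := by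
  rw [del, if_neg hne, if_pos hE]

theorem del_cons_of_not {a b : B} (hne : b ≠ a) (hE : ¬ Ecm cs a b) (u : List B) :
    del cs a (b :: u) = none := by
  rw [del, if_neg hne, if_neg hE]

variable (cs : CoxeterSystem M W)

/-- structure of a successful deletion -/
theorem del_eq_some {cs : CoxeterSystem M W} {a : B} : ∀ {w v : List B}, del cs a w = some v →
    ∃ u₁ u₂, w = u₁ ++ a :: u₂ ∧ v = u₁ ++ u₂ ∧ ∀ x ∈ u₁, x ≠ a ∧ Ecm cs a x
  | [], v => by simp
  | b :: u, v => by
    intro h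
    by_cases hba : b = a
    · subst hba
      rw [del_cons_self] at h
      exact ⟨[], u, rfl, by simpa using h.symm, by simp⟩
    · by_cases hE : Ecm cs a b
      · rw [del_cons_of_ecm cs hba hE] at h
        obtain ⟨v', hv', rfl⟩ := Option.map_eq_some_iff.mp h
        obtain ⟨u₁, u₂, rfl, rfl, hu₁⟩ := del_eq_some hv'
        exact ⟨b :: u₁, u₂, rfl, rfl, by
          intro x hx
          rcases List.mem_cons.mp hx with rfl | hx
          · exact ⟨hba, hE⟩
          · exact hu₁ x hx⟩
      · rw [del_cons_of_not cs hba hE] at h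
        exact absurd h (by simp)

/-- deletion passes through a commuting prefix -/
theorem del_append {cs : CoxeterSystem M W} {a : B} {u : List B}
    (hu : ∀ x ∈ u, x ≠ a ∧ Ecm cs a x) (y : List B) :
    del cs a (u ++ y) = (del cs a y).map (u ++ ·) := by
  induction u with
  | nil => simp
  | cons x u ih =>
    have hx := hu x (by simp)
    rw [List.cons_append, del_cons_of_ecm cs hx.1 hx.2,
      ih (fun z hz => hu z (by simp [hz]))]
    cases del cs a y <;> simp

theorem del_append_self {cs : CoxeterSystem M W} {a : B} {u : List B}
    (hu : ∀ x ∈ u, x ≠ a ∧ Ecm cs a x) (y : List B) :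
    del cs a (u ++ a :: y) = some (u ++ y) := by
  rw [del_append hu, del_cons_self]; rfl

/-- moving a letter leftwards through a commuting prefix -/
theorem csim_move {cs : CoxeterSystem M W} {a : B} : ∀ {u : List B},
    (∀ x ∈ u, Ecm cs a x) → ∀ z : List B, Csim cs (u ++ a :: z) (a :: (u ++ z))
  | [], _, z => Csim.refl cs _
  | x :: u, hu, z => by
    have h1 : Csim cs (x :: (u ++ a :: z)) (x :: (a :: (u ++ z))) :=
      Csim.cons x (csim_move (fun y hy => hu y (by simp [hy])) z)
    refine h1.trans (Relation.ReflTransGen.single ?_)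
    exact ⟨[], u ++ z, x, a, (hu x (by simp)).symm, rfl, rfl⟩

theorem del_some_csim {cs : CoxeterSystem M W} {a : B} {w v : List B}
    (h : del cs a w = some v) : Csim cs w (a :: v) := by
  obtain ⟨u₁, u₂, rfl, rfl, hu₁⟩ := del_eq_some h
  exact csim_move (fun x hx => (hu₁ x hx).2) u₂
/-- how `del` interacts with a single swap -/
theorem del_cswap_aux {cs : CoxeterSystem M W} {a c d : B} (hE : Ecm cs c d) :
    ∀ (l₁ l₂ : List B),
    (del cs a (l₁ ++ c :: d :: l₂) = none ∧ del cs a (l₁ ++ d :: c :: l₂) = none) ∨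
    (∃ v v', del cs a (l₁ ++ c :: d :: l₂) = some v ∧
      del cs a (l₁ ++ d :: c :: l₂) = some v' ∧ Csim cs v v')
  | [], l₂ => by
    simp only [List.nil_append]
    by_cases hca : c = a
    · subst hca
      have hda : d ≠ c := hE.1.symm
      right
      refine ⟨d :: l₂, d :: l₂, del_cons_self cs c (d :: l₂), ?_, Csim.refl cs _⟩
      rw [del_cons_of_ecm cs hda hE, del_cons_self]; rfl
    · by_cases hda : d = a
      · subst hda
        right
        refine ⟨c :: l₂, c :: l₂, ?_, del_cons_self cs d (c :: l₂), Csim.refl cs _⟩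
        rw [del_cons_of_ecm cs hca hE.symm, del_cons_self]; rfl
      · by_cases hac : Ecm cs a c
        · by_cases had : Ecm cs a d
          · rw [del_cons_of_ecm cs hca hac, del_cons_of_ecm cs hda had,
              del_cons_of_ecm cs hda had, del_cons_of_ecm cs hca hac]
            cases hdl : del cs a l₂ with
            | none => left; simp
            | some x =>
              right
              refine ⟨c :: d :: x, d :: c :: x, by simp, by simp, ?_⟩
              exact Relation.ReflTransGen.single ⟨[], x, c, d, hE, rfl, rfl⟩
          · left
            rw [del_cons_of_ecm cs hca hac, del_cons_of_not cs hda had,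
              del_cons_of_not cs hda had]
            simp
        · by_cases had : Ecm cs a d
          · left
            rw [del_cons_of_not cs hca hac, del_cons_of_ecm cs hda had,
              del_cons_of_not cs hca hac]
            simp
          · left
            rw [del_cons_of_not cs hca hac, del_cons_of_not cs hda had]
            simp
  | e :: l₁, l₂ => by
    by_cases hea : e = a
    · subst hea
      rw [List.cons_append, List.cons_append, del_cons_self, del_cons_self]
      right
      refine ⟨_, _, rfl, rfl, Relation.ReflTransGen.single ⟨l₁, l₂, c, d, hE, rfl, rfl⟩⟩
    · by_cases hae : Ecm cs a e
      · rw [List.cons_append, List.cons_append, del_cons_of_ecm cs hea hae,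
          del_cons_of_ecm cs hea hae]
        rcases del_cswap_aux hE l₁ l₂ with ⟨h1, h2⟩ | ⟨v, v', h1, h2, hvv⟩
        · left; rw [h1, h2]; simp
        · right; exact ⟨e :: v, e :: v', by rw [h1]; rfl, by rw [h2]; rfl, hvv.cons e⟩
      · left
        rw [List.cons_append, List.cons_append, del_cons_of_not cs hea hae,
          del_cons_of_not cs hea hae]
        simp

theorem del_cswap {cs : CoxeterSystem M W} {a : B} {t t' : List B} (h : CSwap cs t t') :
    (del cs a t = none ∧ del cs a t' = none) ∨
    (∃ v v', del cs a t = some v ∧ del cs a t' = some v' ∧ Csim cs v v') := by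
  obtain ⟨l₁, l₂, c, d, hE, rfl, rfl⟩ := h
  exact del_cswap_aux hE l₁ l₂

theorem del_csim {cs : CoxeterSystem M W} {a : B} {t t' : List B} (h : Csim cs t t') :
    (del cs a t = none ∧ del cs a t' = none) ∨
    (∃ v v', del cs a t = some v ∧ del cs a t' = some v' ∧ Csim cs v v') := by
  induction h with
  | refl =>
    cases hd : del cs a t with
    | none => left; exact ⟨rfl, rfl⟩
    | some v => right; exact ⟨v, v, rfl, rfl, Csim.refl cs v⟩
  | tail _ hstep ih =>
    rcases ih with ⟨h1, h2⟩ | ⟨v, v', h1, h2, hvv⟩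
    · rcases del_cswap hstep with ⟨h3, h4⟩ | ⟨x, x', h3, h4, _⟩
      · left; exact ⟨h1, h4⟩
      · rw [h2] at h3; exact absurd h3 (by simp)
    · rcases del_cswap hstep with ⟨h3, h4⟩ | ⟨x, x', h3, h4, hxx⟩
      · rw [h2] at h3; exact absurd h3 (by simp)
      · right
        refine ⟨v, x', h1, h4, ?_⟩
        rw [h2] at h3
        exact hvv.trans ((Option.some_injective _ h3) ▸ hxx)
/-- combinatorially reduced words -/
def CRed (cs : CoxeterSystem M W) : List B → Prop
  | [] => True
  | a :: u => CRed cs u ∧ del cs a u = none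

@[simp] theorem cred_nil : CRed cs [] := trivial

theorem cred_cons {a : B} {u : List B} :
    CRed cs (a :: u) ↔ CRed cs u ∧ del cs a u = none := Iff.rfl

/-- `CRed` is invariant under a swap -/
theorem CRed.cswap {cs : CoxeterSystem M W} {w w' : List B} (h : CSwap cs w w')
    (hw : CRed cs w) : CRed cs w' := by
  obtain ⟨l₁, l₂, c, d, hE, rfl, rfl⟩ := h
  induction l₁ with
  | nil =>
    obtain ⟨⟨h2, h3⟩, h4⟩ := hw
    refine ⟨⟨h2, ?_⟩, ?_⟩
    · -- del cs c l₂ = none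
      rw [del_cons_of_ecm cs hE.1.symm hE] at h4
      cases hdl : del cs c l₂ with
      | none => rfl
      | some x => rw [hdl] at h4; exact absurd h4 (by simp)
    · -- del cs d (c :: l₂) = none
      rw [del_cons_of_ecm cs hE.1 hE.symm, h3]; rfl
  | cons e l₁ ih =>
    obtain ⟨h1, h2⟩ := hw
    simp only [List.append_eq] at h1 h2 ⊢
    refine ⟨ih h1, ?_⟩
    rcases del_cswap (a := e) ⟨l₁, l₂, c, d, hE, rfl, rfl⟩ with ⟨_, h4⟩ | ⟨v, v', h3, _, _⟩
    · exact h4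
    · rw [h2] at h3; exact absurd h3 (by simp)

theorem CRed.csim {cs : CoxeterSystem M W} {w w' : List B} (h : Csim cs w w')
    (hw : CRed cs w) : CRed cs w' := by
  induction h with
  | refl => exact hw
  | tail _ hstep ih => exact ih.cswap hstep
/-- the generator operation on words -/
noncomputable def fgen (a : B) (w : List B) : List B :=
  match del cs a w with
  | some v => v
  | none => a :: w

theorem fgen_of_none {cs : CoxeterSystem M W} {a : B} {w : List B} (h : del cs a w = none) :
    fgen cs a w = a :: w := by
  unfold fgen; rw [h]

theorem fgen_of_some {cs : CoxeterSystem M W} {a : B} {w v : List B} (h : del cs a w = some v) :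
    fgen cs a w = v := by
  unfold fgen; rw [h]

/-- `fgen` is a congruence for swap-equivalence -/
theorem fgen_csim {cs : CoxeterSystem M W} {w w' : List B} (a : B) (h : Csim cs w w') :
    Csim cs (fgen cs a w) (fgen cs a w') := by
  rcases del_csim (a := a) h with ⟨h1, h2⟩ | ⟨v, v', h1, h2, hvv⟩
  · rw [fgen_of_none h1, fgen_of_none h2]; exact h.cons a
  · rw [fgen_of_some h1, fgen_of_some h2]; exact hvv

/-- `fgen` preserves combinatorial reducedness -/
theorem CRed.fgen {cs : CoxeterSystem M W} {w : List B} (hw : CRed cs w) (a : B) :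
    CRed cs (fgen cs a w) := by
  cases hd : del cs a w with
  | none => rw [fgen_of_none hd]; exact ⟨hw, hd⟩
  | some v =>
    rw [fgen_of_some hd]
    exact (hw.csim (del_some_csim hd)).1

/-- `fgen` is an involution on combinatorially reduced words (up to swaps) -/
theorem fgen_fgen {cs : CoxeterSystem M W} {w : List B} (hw : CRed cs w) (a : B) :
    Csim cs (fgen cs a (fgen cs a w)) w := by
  cases hd : del cs a w with
  | none =>
    rw [fgen_of_none hd, fgen_of_some (del_cons_self cs a w)]
    exact Csim.refl cs w
  | some v =>
    rw [fgen_of_some hd]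
    have hcv : CRed cs (a :: v) := hw.csim (del_some_csim hd)
    rw [fgen_of_none hcv.2]
    exact (del_some_csim hd).symm

theorem list_split {p r q t : List B} {a b : B} (h : p ++ a :: q = r ++ b :: t)
    (hlt : p.length < r.length) : ∃ m, r = p ++ a :: m ∧ q = m ++ b :: t := by
  induction p generalizing r with
  | nil =>
    cases r with
    | nil => simp at hlt
    | cons x r' =>
      simp only [List.nil_append, List.cons_append, List.cons.injEq] at h
      exact ⟨r', by rw [h.1]; rfl, h.2⟩
  | cons y p' ih =>
    cases r with
    | nil => simp at hlt
    | cons x r' =>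
      simp only [List.cons_append, List.cons.injEq] at h
      obtain ⟨m, hm1, hm2⟩ := ih h.2 (by simpa using hlt)
      exact ⟨m, by rw [h.1, hm1, List.cons_append], hm2⟩

/-- commutation case where the `a` deleted comes strictly before the `b` deleted -/
theorem fgen_comm_aux {cs : CoxeterSystem M W} {a b : B} (hE : Ecm cs a b) {p q r t : List B}
    (hw : p ++ a :: q = r ++ b :: t)
    (hp : ∀ x ∈ p, x ≠ a ∧ Ecm cs a x) (hr : ∀ x ∈ r, x ≠ b ∧ Ecm cs b x)
    (hlt : p.length < r.length) :
    fgen cs a (r ++ t) = fgen cs b (p ++ q) ∧ Csim cs (fgen cs a (r ++ t)) (fgen cs b (p ++ q)) := by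
  obtain ⟨m, rfl, rfl⟩ := list_split hw hlt
  have hm : ∀ x ∈ m, x ≠ b ∧ Ecm cs b x := fun x hx => hr x (by simp [hx])
  have hpb : ∀ x ∈ p, x ≠ b ∧ Ecm cs b x := fun x hx => hr x (by simp [hx])
  have h1 : fgen cs a (p ++ a :: m ++ t) = p ++ (m ++ t) := by
    apply fgen_of_some
    rw [List.append_assoc, List.cons_append]
    exact del_append_self hp (m ++ t)
  have h2 : fgen cs b (p ++ (m ++ b :: t)) = p ++ (m ++ t) := by
    apply fgen_of_some
    rw [← List.append_assoc]
    have := del_append_self (cs := cs) (a := b) (u := p ++ m)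
      (fun x hx => by rcases List.mem_append.mp hx with h | h; exacts [hpb x h, hm x h]) t
    rw [this, List.append_assoc]
  refine ⟨by rw [h1, h2], ?_⟩
  rw [h1, h2]
  exact Csim.refl cs _

/-- `fgen a` and `fgen b` commute up to swaps when `a` and `b` commute -/
theorem fgen_comm {cs : CoxeterSystem M W} {a b : B} (hE : Ecm cs a b) (w : List B) :
    Csim cs (fgen cs a (fgen cs b w)) (fgen cs b (fgen cs a w)) := by
  have hab : a ≠ b := hE.1
  cases hda : del cs a w with
  | none =>
    cases hdb : del cs b w with
    | none =>
      rw [fgen_of_none hda, fgen_of_none hdb]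
      have h1 : del cs a (b :: w) = none := by
        rw [del_cons_of_ecm cs hab.symm hE, hda]; rfl
      have h2 : del cs b (a :: w) = none := by
        rw [del_cons_of_ecm cs hab hE.symm, hdb]; rfl
      rw [fgen_of_none h1, fgen_of_none h2]
      exact Relation.ReflTransGen.single ⟨[], w, a, b, hE, rfl, rfl⟩
    | some v =>
      rw [fgen_of_some hdb, fgen_of_none hda]
      -- del cs a v = none
      have hbv : Csim cs w (b :: v) := del_some_csim hdb
      have h3 : del cs a (b :: v) = none := by
        rcases del_csim (a := a) hbv with ⟨_, h⟩ | ⟨x, x', h1, _, _⟩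
        · exact h
        · rw [hda] at h1; exact absurd h1 (by simp)
      have h4 : del cs a v = none := by
        rw [del_cons_of_ecm cs hab.symm hE] at h3
        cases hdv : del cs a v with
        | none => rfl
        | some x => rw [hdv] at h3; exact absurd h3 (by simp)
      rw [fgen_of_none h4]
      have h5 : del cs b (a :: w) = some (a :: v) := by
        rw [del_cons_of_ecm cs hab hE.symm, hdb]; rfl
      rw [fgen_of_some h5]
      exact Csim.refl cs _
  | some v =>
    cases hdb : del cs b w with
    | none =>
      rw [fgen_of_none hdb, fgen_of_some hda]
      have hav : Csim cs w (a :: v) := del_some_csim hda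
      have h3 : del cs b (a :: v) = none := by
        rcases del_csim (a := b) hav with ⟨_, h⟩ | ⟨x, x', h1, _, _⟩
        · exact h
        · rw [hdb] at h1; exact absurd h1 (by simp)
      have h4 : del cs b v = none := by
        rw [del_cons_of_ecm cs hab hE.symm] at h3
        cases hdv : del cs b v with
        | none => rfl
        | some x => rw [hdv] at h3; exact absurd h3 (by simp)
      rw [fgen_of_none h4]
      have h5 : del cs a (b :: w) = some (b :: v) := by
        rw [del_cons_of_ecm cs hab.symm hE, hda]; rfl
      rw [fgen_of_some h5]
      exact Csim.refl cs _
    | some vb =>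
      rw [fgen_of_some hda, fgen_of_some hdb]
      obtain ⟨p, q, hw1, rfl, hp⟩ := del_eq_some hda
      obtain ⟨r, t, hw2, rfl, hr⟩ := del_eq_some hdb
      have hwrt : p ++ a :: q = r ++ b :: t := by rw [← hw1, ← hw2]
      rcases lt_trichotomy p.length r.length with hlt | heq | hgt
      · exact (fgen_comm_aux hE hwrt hp hr hlt).2
      · exfalso
        have h := (List.append_inj hwrt heq).2
        simp only [List.cons.injEq] at h
        exact hab h.1
      · exact ((fgen_comm_aux hE.symm hwrt.symm hr hp hgt).2).symm
theorem prod_comm_prefix {cs : CoxeterSystem M W} {a : B} : ∀ {u : List B},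
    (∀ x ∈ u, Ecm cs a x) → cs.simple a * cs.wordProd u = cs.wordProd u * cs.simple a
  | [], _ => by simp
  | x :: u, hu => by
    rw [cs.wordProd_cons, ← mul_assoc, (hu x (by simp)).2, mul_assoc,
      prod_comm_prefix (fun y hy => hu y (by simp [hy])), mul_assoc]

theorem prod_fgen {cs : CoxeterSystem M W} (a : B) (w : List B) :
    cs.wordProd (fgen cs a w) = cs.simple a * cs.wordProd w := by
  cases hd : del cs a w with
  | none => rw [fgen_of_none hd, cs.wordProd_cons]
  | some v =>
    rw [fgen_of_some hd]
    obtain ⟨u₁, u₂, rfl, rfl, hu₁⟩ := del_eq_some hd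
    have hc := prod_comm_prefix (cs := cs) (a := a) (fun x hx => (hu₁ x hx).2)
    calc cs.wordProd (u₁ ++ u₂) = cs.wordProd u₁ * cs.wordProd u₂ := cs.wordProd_append u₁ u₂
      _ = cs.simple a * cs.wordProd (u₁ ++ a :: u₂) := by
          rw [cs.wordProd_append, cs.wordProd_cons, ← mul_assoc, hc, mul_assoc,
            ← mul_assoc (cs.simple a), cs.simple_mul_simple_self, one_mul]

theorem fgen_length {cs : CoxeterSystem M W} (a : B) (w : List B) :
    (fgen cs a w).length = w.length + 1 ∨ (fgen cs a w).length + 1 = w.length := by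
  cases hd : del cs a w with
  | none => left; rw [fgen_of_none hd]; rfl
  | some v =>
    right
    rw [fgen_of_some hd]
    obtain ⟨u₁, u₂, rfl, rfl, _⟩ := del_eq_some hd
    simp only [List.length_append, List.length_cons]
    omega

/-- normal form words -/
def NF (cs : CoxeterSystem M W) := {l : List B // CRed cs l}

instance nfSetoid (cs : CoxeterSystem M W) : Setoid (NF cs) :=
  ⟨fun x y => Csim cs x.1 y.1,
    ⟨fun x => Csim.refl cs x.1, fun h => h.symm, fun h h' => h.trans h'⟩⟩

/-- classes of normal form words -/
def NFQ (cs : CoxeterSystem M W) := Quotient (nfSetoid cs)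

/-- generator action on classes of normal form words -/
noncomputable def FQ (a : B) : Equiv.Perm (NFQ cs) where
  toFun := Quotient.map (fun x => ⟨fgen cs a x.1, x.2.fgen a⟩) (fun _ _ h => fgen_csim a h)
  invFun := Quotient.map (fun x => ⟨fgen cs a x.1, x.2.fgen a⟩) (fun _ _ h => fgen_csim a h)
  left_inv := by
    intro q
    induction q using Quotient.inductionOn with
    | h x => exact Quotient.sound (fgen_fgen x.2 a)
  right_inv := by
    intro q
    induction q using Quotient.inductionOn with
    | h x => exact Quotient.sound (fgen_fgen x.2 a)

theorem FQ_mul_self (a : B) : FQ cs a * FQ cs a = 1 := by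
  ext q
  exact (FQ cs a).left_inv q

theorem FQ_comm {cs : CoxeterSystem M W} {a b : B} (hE : Ecm cs a b) :
    FQ cs a * FQ cs b = FQ cs b * FQ cs a := by
  ext q
  induction q using Quotient.inductionOn with
  | h x => exact Quotient.sound (fgen_comm hE x.1)

theorem ecm_of_two {cs : CoxeterSystem M W} {a b : B} (hab : a ≠ b) (hm : M a b = 2) :
    Ecm cs a b := by
  refine ⟨hab, ?_⟩
  have h2 := cs.simple_mul_simple_pow a b
  rw [hm, sq] at h2
  calc cs.simple a * cs.simple b = (cs.simple a * cs.simple b)⁻¹ :=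
        eq_inv_of_mul_eq_one_left h2
    _ = cs.simple b * cs.simple a := by rw [mul_inv_rev, cs.inv_simple, cs.inv_simple]

theorem liftable (hra : ∀ i j : B, i ≠ j → M i j = 2 ∨ M i j = 0) :
    M.IsLiftable (fun i => FQ cs i) := by
  intro i j
  by_cases hij : i = j
  · subst hij
    rw [M.diagonal i, pow_one, FQ_mul_self]
  · rcases hra i j hij with hm | hm
    · rw [hm, sq]
      calc FQ cs i * FQ cs j * (FQ cs i * FQ cs j)
          = FQ cs i * ((FQ cs j * FQ cs i) * FQ cs j) := by group
        _ = FQ cs i * ((FQ cs i * FQ cs j) * FQ cs j) := by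
            rw [← FQ_comm (ecm_of_two hij hm)]
        _ = (FQ cs i * FQ cs i) * (FQ cs j * FQ cs j) := by group
        _ = 1 := by rw [FQ_mul_self, FQ_mul_self, one_mul]
    · rw [hm, pow_zero]

/-- the action of `W` on classes of normal form words -/
noncomputable def Phi (hra : ∀ i j : B, i ≠ j → M i j = 2 ∨ M i j = 0) :
    W →* Equiv.Perm (NFQ cs) :=
  cs.lift ⟨fun i => FQ cs i, liftable cs hra⟩
/-- right-to-left normalization of a word -/
noncomputable def rho (cs : CoxeterSystem M W) : List B → List B
  | [] => []
  | a :: u => fgen cs a (rho cs u)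

theorem rho_cons (a : B) (u : List B) : rho cs (a :: u) = fgen cs a (rho cs u) := rfl

theorem cred_rho (w : List B) : CRed cs (rho cs w) := by
  induction w with
  | nil => exact trivial
  | cons a u ih => exact ih.fgen a

theorem prod_rho (w : List B) : cs.wordProd (rho cs w) = cs.wordProd w := by
  induction w with
  | nil => rfl
  | cons a u ih => rw [rho_cons, prod_fgen, ih, cs.wordProd_cons]

theorem rho_length (w : List B) :
    (rho cs w).length ≤ w.length ∧ (rho cs w = w ∨ (rho cs w).length + 2 ≤ w.length) := by
  induction w with
  | nil => exact ⟨le_refl 0, Or.inl rfl⟩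
  | cons a u ih =>
    obtain ⟨hle, heq⟩ := ih
    rcases fgen_length (cs := cs) a (rho cs u) with hl | hl
    · rcases heq with he | he
      · constructor
        · rw [rho_cons, hl, he]; rfl
        · left
          rw [rho_cons]
          rw [he] at hl ⊢
          cases hfd : del cs a u with
          | none => exact fgen_of_none hfd
          | some v =>
            exfalso
            rw [fgen_of_some hfd] at hl
            obtain ⟨u₁, u₂, hu, rfl, _⟩ := del_eq_some hfd
            rw [hu] at hl
            simp at hl
            omega
      · refine ⟨by rw [rho_cons]; simp only [List.length_cons]; omega, Or.inr ?_⟩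
        rw [rho_cons]
        simp only [List.length_cons]
        omega
    · refine ⟨?_, Or.inr ?_⟩ <;> rw [rho_cons] <;> simp only [List.length_cons] <;> omega

theorem rho_eq_of_reduced {cs : CoxeterSystem M W} {w : List B} (hw : cs.IsReduced w) :
    rho cs w = w := by
  rcases (rho_length cs w).2 with h | h
  · exact h
  · exfalso
    have h2 : cs.length (cs.wordProd w) ≤ (rho cs w).length := by
      rw [← prod_rho cs w]
      exact cs.length_wordProd_le (rho cs w)
    rw [hw] at h2
    omega

theorem Phi_wordProd (hra : ∀ i j : B, i ≠ j → M i j = 2 ∨ M i j = 0) (w : List B) :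
    Phi cs hra (cs.wordProd w) ⟦⟨[], trivial⟩⟧ = ⟦⟨rho cs w, cred_rho cs w⟩⟧ := by
  induction w with
  | nil => rw [cs.wordProd_nil, map_one]; rfl
  | cons a u ih =>
    rw [cs.wordProd_cons, map_mul]
    have hs : Phi cs hra (cs.simple a) = FQ cs a := cs.lift_apply_simple (liftable cs hra) a
    refine (congrArg (Phi cs hra (cs.simple a)) ih).trans ?_
    rw [hs]
    rfl
end RAux

open RAux in
theorem right_angled_word_property (cs : CoxeterSystem M W)
    (hra : ∀ i j : B, i ≠ j → M i j = 2 ∨ M i j = 0) :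
    (∀ w w' : List B, cs.IsReduced w → cs.IsReduced w' →
      (cs.wordProd w = cs.wordProd w' ↔ Relation.ReflTransGen (SwapStep cs) w w')) ∧
    (∀ w : List B, cs.wordProd w = 1 →
      Relation.ReflTransGen (fun l l' => SwapStep cs l l' ∨ DelStep l l') w []) := by
  -- basic transfer lemmas
  have cswap_swap : ∀ {l l' : List B}, CSwap cs l l' → SwapStep cs l l' := by
    rintro l l' ⟨l₁, l₂, a, b, hE, rfl, rfl⟩
    exact ⟨l₁, l₂, a, b, hE.2, rfl, rfl⟩
  have swap_prod : ∀ {l l' : List B}, SwapStep cs l l' →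
      cs.wordProd l = cs.wordProd l' := by
    rintro l l' ⟨l₁, l₂, a, b, hc, rfl, rfl⟩
    simp only [cs.wordProd_append, cs.wordProd_cons, ← mul_assoc]
    rw [mul_assoc (cs.wordProd l₁), hc, ← mul_assoc]
  constructor
  · intro w w' hw hw'
    constructor
    · intro hp
      have h1 := Phi_wordProd cs hra w
      have h2 := Phi_wordProd cs hra w'
      rw [hp, h2] at h1
      have h3 : Csim cs (rho cs w') (rho cs w) := Quotient.exact h1
      rw [rho_eq_of_reduced hw, rho_eq_of_reduced hw'] at h3
      exact Relation.ReflTransGen.mono (fun _ _ h => cswap_swap h) _ _ h3.symm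
    · intro h
      clear hw hw'
      induction h with
      | refl => rfl
      | tail _ hstep ih => exact ih.trans (swap_prod hstep)
  · intro w hw
    -- step relations are stable under cons
    have step_cons : ∀ (c : B) {l l' : List B}, (SwapStep cs l l' ∨ DelStep l l') →
        (SwapStep cs (c :: l) (c :: l') ∨ DelStep (c :: l) (c :: l')) := by
      rintro c l l' (⟨l₁, l₂, a, b, hc, rfl, rfl⟩ | ⟨l₁, l₂, a, rfl, rfl⟩)
      · exact Or.inl ⟨c :: l₁, l₂, a, b, hc, rfl, rfl⟩
      · exact Or.inr ⟨c :: l₁, l₂, a, rfl, rfl⟩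
    have csim_steps : ∀ {l l' : List B}, Csim cs l l' →
        Relation.ReflTransGen (fun l l' => SwapStep cs l l' ∨ DelStep l l') l l' :=
      fun h => Relation.ReflTransGen.mono (fun _ _ hs => Or.inl (cswap_swap hs)) _ _ h
    -- every word reaches its normal form
    have reach : ∀ u : List B,
        Relation.ReflTransGen (fun l l' => SwapStep cs l l' ∨ DelStep l l') u (rho cs u) := by
      intro u
      induction u with
      | nil => exact Relation.ReflTransGen.refl
      | cons a u ih =>
        have h1 : Relation.ReflTransGen (fun l l' => SwapStep cs l l' ∨ DelStep l l')
            (a :: u) (a :: rho cs u) :=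
          Relation.ReflTransGen.lift (List.cons a) (fun _ _ h => step_cons a h) _ _ ih
        refine h1.trans ?_
        rw [rho_cons]
        cases hd : del cs a (rho cs u) with
        | none => rw [fgen_of_none hd]
        | some v =>
          rw [fgen_of_some hd]
          obtain ⟨u₁, u₂, hdc, rfl, hu₁⟩ := del_eq_some hd
          rw [hdc]
          have h2 : Csim cs (a :: (u₁ ++ a :: u₂)) (a :: a :: (u₁ ++ u₂)) :=
            Csim.cons a (csim_move (fun x hx => (hu₁ x hx).2) u₂)
          refine (csim_steps h2).trans (Relation.ReflTransGen.single ?_)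
          exact Or.inr ⟨[], u₁ ++ u₂, a, rfl, rfl⟩
    have h1 := Phi_wordProd cs hra w
    rw [hw, map_one] at h1
    have h3 : Csim cs [] (rho cs w) := Quotient.exact h1
    have h4 : rho cs w = [] := List.length_eq_zero_iff.mp (h3.length.symm)
    have := reach w
    rw [h4] at this
    exact this
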